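/- If I is a prime ideal of a commutative Poisson algebra Z₀ over a field of characteristic 0, then the Poisson core P(I) of I is a prime Poisson ideal. -/
import Mathlib

/-- In a `k`-algebra with `k` a field of characteristic zero, ideal membership can be
divided by nonzero natural numbers. -/
lemma aux_nsmul_mem {k : Type*} [Field k] [CharZero k] {R : Type*} [CommRing R]
    [Algebra k R] (P : Ideal R) {n : ℕ} (hn : n ≠ 0) {x : R} (h : n • x ∈ P) : x ∈ P := by
  have hk : (n : k) ≠ 0 := Nat.cast_ne_zero.mpr hn
  have h1 : ((n : ℕ) : R) * x ∈ P := by rwa [nsmul_eq_mul] at h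
  have h2 : algebraMap k R ((n : k)⁻¹) * ((n : ℕ) * x) ∈ P := Ideal.mul_mem_left _ _ h1
  have h3 : algebraMap k R ((n : k)⁻¹) * ((n : ℕ) * x) = x := by
    rw [← map_natCast (algebraMap k R) n, ← mul_assoc, ← map_mul, inv_mul_cancel₀ hk,
      map_one, one_mul]
  rwa [h3] at h2

/-- Kaplansky's inductive step: if `a ^ j * (D a) ^ m ∈ P` for a differential ideal `P`,
then `(D a) ^ (m + 2 * j) ∈ P`. -/
lemma aux_dix {k : Type*} [Field k] [CharZero k] {R : Type*} [CommRing R] [Algebra k R]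
    (D : Derivation k R R) (P : Ideal R) (hP : ∀ x ∈ P, D x ∈ P) (a : R) :
    ∀ j m : ℕ, a ^ j * (D a) ^ m ∈ P → (D a) ^ (m + 2 * j) ∈ P := by
  intro j
  induction j with
  | zero => intro m h; simpa using h
  | succ j ih =>
    intro m h
    set d := D a with hd
    have h1 : D (a ^ (j + 1) * d ^ m) ∈ P := hP _ h
    have h2 : D (a ^ (j + 1) * d ^ m) * d ∈ P := Ideal.mul_mem_right _ _ h1
    have h3 : m • (a ^ (j + 1) * d ^ m * D d) ∈ P := nsmul_mem (Ideal.mul_mem_right _ _ h) m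
    have hexp : D (a ^ (j + 1) * d ^ m) * d
        = (j + 1) • (a ^ j * d ^ (m + 2)) + m • (a ^ (j + 1) * d ^ m * D d) := by
      rw [Derivation.leibniz, Derivation.leibniz_pow, Derivation.leibniz_pow]
      simp only [Nat.add_sub_cancel, smul_eq_mul]
      cases m with
      | zero => simp [pow_succ]; ring
      | succ m =>
        simp only [Nat.add_sub_cancel, smul_eq_mul, ← hd]
        push_cast [pow_succ]
        ring
    have h4 : (j + 1) • (a ^ j * d ^ (m + 2)) ∈ P := by
      have := P.sub_mem h2 h3
      rwa [hexp, add_sub_cancel_right] at this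
    have h5 : a ^ j * d ^ (m + 2) ∈ P := aux_nsmul_mem (k := k) P (Nat.succ_ne_zero j) h4
    have := ih (m + 2) h5
    have harith : m + 2 + 2 * j = m + 2 * (j + 1) := by ring
    rwa [harith] at this

theorem poisson_core_of_prime_is_prime
    (k : Type*) [Field k] [CharZero k]
    (Z₀ : Type*) [CommRing Z₀] [Algebra k Z₀] [IsNoetherianRing Z₀]
    (bracket : Z₀ → Z₀ → Z₀)
    (hadd_l : ∀ a b c : Z₀, bracket (a + b) c = bracket a c + bracket b c)
    (hadd_r : ∀ a b c : Z₀, bracket a (b + c) = bracket a b + bracket a c)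
    (hsmul_l : ∀ (r : k) (a b : Z₀), bracket (r • a) b = r • bracket a b)
    (hsmul_r : ∀ (r : k) (a b : Z₀), bracket a (r • b) = r • bracket a b)
    (hleib_r : ∀ a b c : Z₀, bracket a (b * c) = bracket a b * c + b * bracket a c)
    (hanti : ∀ a b : Z₀, bracket a b = - bracket b a)
    (hjac : ∀ a b c : Z₀,
      bracket a (bracket b c) + bracket b (bracket c a) + bracket c (bracket a b) = 0)
    (I : Ideal Z₀) (hIprime : I.IsPrime)
    (P : Ideal Z₀)
    (hPpoisson : ∀ z : Z₀, ∀ a ∈ P, bracket z a ∈ P)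
    (hPle : P ≤ I)
    (hPmax : ∀ Q : Ideal Z₀, (∀ z : Z₀, ∀ a ∈ Q, bracket z a ∈ Q) → Q ≤ I → Q ≤ P) :
    P.IsPrime := by
  classical
  haveI := hIprime
  -- the bracket with a fixed element is a `k`-derivation
  have hbr1 : ∀ z : Z₀, bracket z 1 = 0 := by
    intro z
    have := hleib_r z 1 1
    rw [mul_one, mul_one, one_mul] at this
    exact add_eq_left.mp this.symm
  let D : Z₀ → Derivation k Z₀ Z₀ := fun z =>
    { toFun := bracket z
      map_add' := hadd_r z
      map_smul' := fun r b => by simpa using hsmul_r r z b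
      map_one_eq_zero' := hbr1 z
      leibniz' := fun b c => by
        simp only [LinearMap.coe_mk, AddHom.coe_mk, smul_eq_mul]
        rw [hleib_r z b c]; ring }
  have hDdef : ∀ z x : Z₀, D z x = bracket z x := fun _ _ => rfl
  -- the radical of P is a Poisson ideal
  have hradP : ∀ z : Z₀, ∀ a ∈ P.radical, bracket z a ∈ P.radical := by
    intro z a ha
    obtain ⟨n, hn⟩ := ha
    have h0 : a ^ n * (D z a) ^ 0 ∈ P := by simpa using hn
    have := aux_dix (D z) P (fun x hx => hPpoisson z x hx) a n 0 h0
    exact ⟨0 + 2 * n, by simpa [hDdef] using this⟩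
  have hradle : P.radical ≤ I := by
    have := Ideal.radical_mono hPle
    rwa [hIprime.radical] at this
  have hPrad : P.radical = P :=
    le_antisymm (hPmax _ hradP hradle) Ideal.le_radical
  -- pick a minimal prime of P below I
  obtain ⟨p, hp, hpI⟩ := Ideal.exists_minimalPrimes_le hPle
  have ppr : p.IsPrime := hp.1.1
  have hPp : P ≤ p := hp.1.2
  -- finiteness of the set of minimal primes
  have hfin : P.minimalPrimes.Finite := by
    rw [Ideal.minimalPrimes_eq_comap]
    exact (minimalPrimes.finite_of_isNoetherianRing _).image _
  set F : Finset (Ideal Z₀) := hfin.toFinset with hF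
  have hpF : p ∈ F := hfin.mem_toFinset.mpr hp
  -- find s outside p but in all other minimal primes
  have hs : ∃ s, s ∈ (F.erase p).inf id ∧ s ∉ p := by
    by_contra hcon
    push_neg at hcon
    have hle : (F.erase p).inf id ≤ p := fun x hx => by
      by_contra hxp; exact hxp (hcon x hx)
    obtain ⟨q, hqF, hqp⟩ := (ppr.inf_le').mp hle
    have hqne : q ≠ p := Finset.ne_of_mem_erase hqF
    have hq : q ∈ P.minimalPrimes := hfin.mem_toFinset.mp (Finset.mem_of_mem_erase hqF)
    exact hqne (le_antisymm hqp (hp.2 hq.1 hqp))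
  obtain ⟨s, hsmem, hsp⟩ := hs
  -- p is a Poisson ideal
  have hpPoisson : ∀ z : Z₀, ∀ a ∈ p, bracket z a ∈ p := by
    intro z a ha
    have hsa : s * a ∈ P := by
      rw [← hPrad, ← Ideal.sInf_minimalPrimes]
      rw [Submodule.mem_sInf]
      intro q hq
      by_cases hqp : q = p
      · subst hqp; exact Ideal.mul_mem_left _ _ ha
      · have hqF : q ∈ F.erase p :=
          Finset.mem_erase.mpr ⟨hqp, hfin.mem_toFinset.mpr hq⟩
        have : (F.erase p).inf id ≤ q := Finset.inf_le hqF
        exact Ideal.mul_mem_right _ _ (this hsmem)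
    have hbr : bracket z (s * a) ∈ p := hPp (hPpoisson z _ hsa)
    rw [hleib_r] at hbr
    have h1 : bracket z s * a ∈ p := Ideal.mul_mem_left _ _ ha
    have h2 : s * bracket z a ∈ p := by
      have := p.sub_mem hbr h1
      rwa [add_sub_cancel_left] at this
    exact (ppr.mem_or_mem h2).resolve_left hsp
  have hple : p ≤ P := hPmax p hpPoisson hpI
  have : P = p := le_antisymm hPp hple
  rw [this]
  exact ppr
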